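/- Let k be a commutative ring with ℚ ⊆ k, U a poset with binary meets, and F a presheaf of k-modules on U. Then the map ι : C'^p_simp(F) → Č'^p(F), ι(φ)^τ = Σ_{s∈S_{p+1}} (−1)^s φ^{(τs)‾}, and the map π : Č'^p(F) → C'^p_simp(F), π(ψ)^σ = ψ^{σ̃}, are well defined (ι(φ) is alternating and π(ψ) is reduced) and are morphisms of complexes, i.e. ι ∘ d_simp = d_Čech ∘ ι and π ∘ d_Čech = d_simp ∘ π; moreover π ∘ ι = id on C'^•_simp(F). -/

import Mathlib

/-!
STATEMENT 18: Let `k` be a commutative ring with `ℚ ⊆ k`, `U` a poset with binary meets, and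
`F` a presheaf of `k`-modules on `U`.  Then the map
`ι : C'^p_simp(F) → Č'^p(F)`, `ι(φ)^τ = ∑_{s ∈ S_{p+1}} (−1)^s φ^{(τs)‾}`, and the map
`π : Č'^p(F) → C'^p_simp(F)`, `π(ψ)^σ = ψ^{σ̃}`, are well defined (`ι(φ)` is alternating and
`π(ψ)` is reduced) and are morphisms of complexes, i.e. `ι ∘ d_simp = d_Čech ∘ ι` and
`π ∘ d_Čech = d_simp ∘ π`; moreover `π ∘ ι = id` on `C'^•_simp(F)`.

A `p`-simplex of `U` is a chain, modelled as a monotone map `Fin (p+1) →o U`; tuples are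
arbitrary maps `Fin (p+1) → U`, `∩τ` is the meet of the entries of `τ`, and `τ‾` is the chain
with `i`-th entry `∩_{j ≥ i} τ_j`.  Both differentials are `∑_i (−1)^i (restriction of the
value at the `i`-th face)`, the `i`-th face of a tuple (or chain) being its precomposition
with `Fin.succAbove i` (this drops the `i`-th entry; in the simplicial case the values at the
faces with `i ≥ 1` are canonically identified with elements over `dσ` via the restriction
maps along the equalities `d(∂_iσ) = dσ`).
-/

namespace Stmt18

universe w u

variable {k : Type w} {U : Type u} [CommRing k] [Algebra ℚ k] [SemilatticeInf U]

/-- A presheaf of `k`-modules on the poset `U`. -/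
structure PreMod (k : Type w) (U : Type u) [CommRing k] [SemilatticeInf U] where
  obj : U → Type w
  [acgObj : ∀ X, AddCommGroup (obj X)]
  [modObj : ∀ X, Module k (obj X)]
  res : ∀ {X Y : U}, X ≤ Y → (obj Y →ₗ[k] obj X)
  res_refl : ∀ X : U, res (le_refl X) = LinearMap.id
  res_trans : ∀ {X Y Z : U} (h₁ : X ≤ Y) (h₂ : Y ≤ Z), res (h₁.trans h₂) = (res h₁).comp (res h₂)

attribute [instance] PreMod.acgObj PreMod.modObj

/-- The meet `∩τ` of all the entries of a tuple. -/
def capT {p : ℕ} (τ : Fin (p + 1) → U) : U :=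
  Finset.univ.inf' Finset.univ_nonempty τ

lemma capT_le {p : ℕ} (τ : Fin (p + 1) → U) (j : Fin (p + 1)) : capT τ ≤ τ j :=
  Finset.inf'_le _ (Finset.mem_univ _)

lemma capT_le_comp {p q : ℕ} (τ : Fin (p + 1) → U) (f : Fin (q + 1) → Fin (p + 1)) :
    capT τ ≤ capT (τ ∘ f) :=
  Finset.le_inf' _ _ fun j _ => capT_le τ (f j)

variable (F : PreMod k U)

/-- The Čech cochains `Č^p(F) = ∏_{τ ∈ U^{p+1}} F(∩τ)`. -/
abbrev CechC (p : ℕ) := ∀ τ : Fin (p + 1) → U, F.obj (capT τ)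

/-- The simplicial cochains `C^p_simp(F) = ∏_{σ ∈ N_p(U)} F(dσ)`. -/
abbrev SimpC (p : ℕ) := ∀ σ : Fin (p + 1) →o U, F.obj (σ 0)

/-- The Čech differential `d_Čech(ψ)^τ = ∑_{i=0}^{p+1} (−1)^i ψ^{∂_iτ}|_{∩τ}`. -/
def dCech (p : ℕ) (ψ : CechC F p) : CechC F (p + 1) := fun τ =>
  ∑ i : Fin (p + 2), ((-1 : ℤ) ^ (i : ℕ)) •
    F.res (capT_le_comp τ i.succAbove) (ψ (τ ∘ i.succAbove))

/-- The `i`-th face of a chain. -/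
def faceC {p : ℕ} (i : Fin (p + 2)) (σ : Fin (p + 2) →o U) : Fin (p + 1) →o U :=
  σ.comp ⟨i.succAbove, (Fin.succAboveOrderEmb i).monotone⟩

/-- The simplicial differential `d_simp(φ)^σ = φ^{∂₀σ}|_{dσ} + ∑_{i=1}^{p+1} (−1)^i φ^{∂_iσ}`
(the values at the faces with `i ≥ 1` being identified with elements over `dσ` by the
restriction maps along the equalities `d(∂_iσ) = dσ`). -/
def dSimp (p : ℕ) (φ : SimpC F p) : SimpC F (p + 1) := fun σ =>
  ∑ i : Fin (p + 2), ((-1 : ℤ) ^ (i : ℕ)) •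
    F.res (σ.monotone (Fin.zero_le _)) (φ (faceC i σ))

lemma capT_perm {p : ℕ} (τ : Fin (p + 1) → U) (s : Equiv.Perm (Fin (p + 1))) :
    capT (τ ∘ s) = capT τ :=
  le_antisymm
    (Finset.le_inf' _ _ fun j _ => by simpa using capT_le (τ ∘ s) (s.symm j))
    (capT_le_comp τ s)

/-- A Čech cochain is alternating if it vanishes on tuples with two equal entries and is
(anti)symmetric under permutations of the entries. -/
def IsAlt {p : ℕ} (ψ : CechC F p) : Prop :=
  (∀ τ : Fin (p + 1) → U, (∃ i j, i ≠ j ∧ τ i = τ j) → ψ τ = 0) ∧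
  (∀ (τ : Fin (p + 1) → U) (s : Equiv.Perm (Fin (p + 1))),
    ψ (τ ∘ s) = (Equiv.Perm.sign s : ℤ) • F.res (le_of_eq (capT_perm τ s)) (ψ τ))

/-- A simplicial cochain is reduced if it vanishes on degenerate chains (in particular all
`0`-cochains are reduced). -/
def IsRed {p : ℕ} (φ : SimpC F p) : Prop :=
  ∀ σ : Fin (p + 1) →o U, (∃ i : Fin p, σ i.castSucc = σ i.succ) → φ σ = 0

/-- The chain `τ‾` associated to a tuple `τ`, with `i`-th entry `∩_{j ≥ i} τ_j`. -/
def tbarF {p : ℕ} (τ : Fin (p + 1) → U) : Fin (p + 1) → U := fun i =>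
  (Finset.univ.filter fun j => i ≤ j).inf' ⟨i, by simp⟩ τ

lemma tbarF_monotone {p : ℕ} (τ : Fin (p + 1) → U) : Monotone (tbarF τ) := by
  intro i i' h
  exact Finset.inf'_mono _ (fun j hj => by
    simp only [Finset.mem_filter, Finset.mem_univ, true_and] at hj ⊢
    exact h.trans hj) _

/-- The chain `τ‾` as a monotone map. -/
def tbar {p : ℕ} (τ : Fin (p + 1) → U) : Fin (p + 1) →o U :=
  ⟨tbarF τ, tbarF_monotone τ⟩

lemma capT_le_tbar_zero {p : ℕ} (τ : Fin (p + 1) → U) : capT τ ≤ tbar τ 0 := by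
  show capT τ ≤ tbarF τ 0
  unfold tbarF
  exact Finset.le_inf' _ τ fun j _ => capT_le τ j

lemma le_capT_coe {p : ℕ} (σ : Fin (p + 1) →o U) : σ 0 ≤ capT ⇑σ :=
  Finset.le_inf' _ _ fun j _ => σ.monotone (Fin.zero_le j)

/-- `ι(φ)^τ = ∑_{s ∈ S_{p+1}} (−1)^s φ^{(τs)‾}`. -/
def iota (p : ℕ) (φ : SimpC F p) : CechC F p := fun τ =>
  ∑ s : Equiv.Perm (Fin (p + 1)), (Equiv.Perm.sign s : ℤ) •
    F.res (capT_le_tbar_zero (τ ∘ s) |>.trans' (le_of_eq (capT_perm τ s).symm))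
      (φ (tbar (τ ∘ s)))

/-- `π(ψ)^σ = ψ^{σ̃}`. -/
def pi (p : ℕ) (ψ : CechC F p) : SimpC F p := fun σ =>
  F.res (le_capT_coe σ) (ψ ⇑σ)

-- ===== auxiliary lemmas =====
set_option linter.unusedSectionVars false

lemma res_res {X Y Z : U} (h₁ : X ≤ Y) (h₂ : Y ≤ Z) (x : F.obj Z) :
    F.res h₁ (F.res h₂ x) = F.res (h₁.trans h₂) x := by
  conv_rhs => rw [F.res_trans h₁ h₂]
  rfl

lemma res_congr {p : ℕ} (φ : SimpC F p) {X : U} {χ χ' : Fin (p + 1) →o U} (h : χ = χ')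
    (h₁ : X ≤ χ 0) (h₂ : X ≤ χ' 0) : F.res h₁ (φ χ) = F.res h₂ (φ χ') := by
  subst h; rfl

lemma res_refl_apply {X : U} (h : X ≤ X) (x : F.obj X) : F.res h x = x := by
  have : F.res (le_refl X) x = x := by rw [F.res_refl]; rfl
  exact this

lemma tbar_coe_eq {p : ℕ} (σ : Fin (p + 1) →o U) : tbar (⇑σ) = σ := by
  ext i
  show tbarF (⇑σ) i = σ i
  unfold tbarF
  refine le_antisymm (Finset.inf'_le _ (by simp)) (Finset.le_inf' _ _ ?_)
  intro j hj
  simp only [Finset.mem_filter, Finset.mem_univ, true_and] at hj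
  exact σ.monotone hj
lemma res_congrT {p : ℕ} (ψ : CechC F p) {X : U} {τ τ' : Fin (p + 1) → U} (h : τ = τ')
    (h₁ : X ≤ capT τ) (h₂ : X ≤ capT τ') : F.res h₁ (ψ τ) = F.res h₂ (ψ τ') := by
  subst h; rfl

lemma part2 {p : ℕ} (ψ : CechC F p) (h : IsAlt F ψ) : IsRed F (pi F p ψ) := by
  rintro σ ⟨i, hi⟩
  have hz : ψ ⇑σ = 0 := h.1 _ ⟨i.castSucc, i.succ, (Fin.castSucc_lt_succ (i := i)).ne, hi⟩
  simp [pi, hz]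

lemma part4 {p : ℕ} (ψ : CechC F p) :
    pi F (p + 1) (dCech F p ψ) = dSimp F p (pi F p ψ) := by
  funext σ
  show F.res _ (∑ i : Fin (p + 2), _) = _
  rw [map_sum]
  refine Finset.sum_congr rfl fun i _ => ?_
  rw [map_zsmul]
  congr 1
  show F.res _ (F.res _ (ψ (⇑σ ∘ i.succAbove))) = F.res _ (F.res _ (ψ ⇑(faceC i σ)))
  rw [res_res]
  exact (res_congrT F ψ rfl _ _).trans (res_res F _ _ _).symm
lemma perm_eq_one_of_strictMono {n : ℕ} (s : Equiv.Perm (Fin n)) (hs : StrictMono ⇑s) :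
    s = 1 := by
  have inst : WellFoundedLT (Fin n) := inferInstance
  have h : ⇑s = id := by
    have h2 := @StrictMono.range_inj (Fin n) (Fin n) _ _ inst ⇑s id hs strictMono_id
    rw [← h2, s.surjective.range_eq, Set.range_id]
  exact Equiv.ext fun x => congrFun h x

lemma tbar_degen {p : ℕ} (σ : Fin (p + 1) →o U) (s : Equiv.Perm (Fin (p + 1))) (hs : s ≠ 1) :
    ∃ i : Fin p, tbar (⇑σ ∘ ⇑s) i.castSucc = tbar (⇑σ ∘ ⇑s) i.succ := by
  have hns : ¬ StrictMono ⇑s := fun h => hs (perm_eq_one_of_strictMono s h)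
  rw [StrictMono] at hns
  push_neg at hns
  obtain ⟨a, b, hab, hba⟩ := hns
  have hap : (a : ℕ) < p := lt_of_lt_of_le hab (Nat.lt_succ_iff.mp b.isLt)
  refine ⟨⟨a, hap⟩, ?_⟩
  have hca : Fin.castSucc ⟨a, hap⟩ = a := by ext; rfl
  refine le_antisymm ((tbar _).monotone Fin.castSucc_lt_succ.le) ?_
  show tbarF _ _ ≤ tbarF _ _
  unfold tbarF
  refine Finset.le_inf' _ _ ?_
  intro j hj
  simp only [Finset.mem_filter, Finset.mem_univ, true_and] at hj
  rcases eq_or_lt_of_le hj with hj | hj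
  · -- j = castSucc i = a
    have hbmem : b ∈ Finset.univ.filter (fun l => Fin.succ ⟨a, hap⟩ ≤ l) := by
      simp only [Finset.mem_filter, Finset.mem_univ, true_and]
      show (a : ℕ) + 1 ≤ (b : ℕ)
      exact hab
    calc Finset.inf' _ _ (⇑σ ∘ ⇑s) ≤ (⇑σ ∘ ⇑s) b := Finset.inf'_le _ hbmem
    _ ≤ (⇑σ ∘ ⇑s) j := by
        show σ (s b) ≤ σ (s j)
        rw [← hj, hca]
        exact σ.monotone hba
  · refine Finset.inf'_le _ ?_
    simp only [Finset.mem_filter, Finset.mem_univ, true_and]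
    rw [hca] at hj
    exact hj

lemma part5 {p : ℕ} (φ : SimpC F p) (hφ : IsRed F φ) : pi F p (iota F p φ) = φ := by
  funext σ
  show F.res _ (∑ s : Equiv.Perm (Fin (p + 1)), _) = φ σ
  rw [map_sum, Finset.sum_eq_single (1 : Equiv.Perm (Fin (p + 1)))]
  · rw [map_zsmul]
    simp only [Equiv.Perm.sign_one, Units.val_one, one_smul]
    rw [res_res]
    have hc : tbar (⇑σ ∘ ⇑(1 : Equiv.Perm (Fin (p + 1)))) = σ := by
      rw [show ⇑σ ∘ ⇑(1 : Equiv.Perm (Fin (p + 1))) = ⇑σ from rfl, tbar_coe_eq]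
    exact (res_congr F φ hc _ (le_refl _)).trans (res_refl_apply F _ _)
  · intro s _ hs
    have hz : φ (tbar (⇑σ ∘ ⇑s)) = 0 := hφ _ (tbar_degen σ s hs)
    rw [hz]
    simp
  · intro h
    exact absurd (Finset.mem_univ _) h
lemma comp_swap_eq {p : ℕ} (τ : Fin (p + 1) → U) {i j : Fin (p + 1)} (hτ : τ i = τ j) :
    τ ∘ ⇑(Equiv.swap i j) = τ := by
  funext y
  rcases eq_or_ne y i with rfl | hyi
  · show τ (Equiv.swap y j y) = τ y
    rw [Equiv.swap_apply_left]; exact hτ.symm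
  rcases eq_or_ne y j with rfl | hyj
  · show τ (Equiv.swap i y y) = τ y
    rw [Equiv.swap_apply_right]; exact hτ
  · show τ (Equiv.swap i j y) = τ y
    rw [Equiv.swap_apply_of_ne_of_ne hyi hyj]

lemma comp_mul {p : ℕ} (τ : Fin (p + 1) → U) (s t : Equiv.Perm (Fin (p + 1))) :
    τ ∘ ⇑(s * t) = (τ ∘ ⇑s) ∘ ⇑t := rfl

lemma part1a {p : ℕ} (φ : SimpC F p) (τ : Fin (p + 1) → U)
    (hτ : ∃ i j, i ≠ j ∧ τ i = τ j) : iota F p φ τ = 0 := by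
  obtain ⟨i, j, hij, hτ⟩ := hτ
  unfold iota
  refine Finset.sum_ninvolution (fun s => Equiv.swap i j * s) ?_ ?_
    (fun s => Finset.mem_univ _) ?_
  · intro s
    have hcomp : τ ∘ ⇑(Equiv.swap i j * s) = τ ∘ ⇑s := by
      rw [comp_mul, comp_swap_eq τ hτ]
    have hsign : ((Equiv.Perm.sign (Equiv.swap i j * s) : ℤ)) = -(Equiv.Perm.sign s : ℤ) := by
      rw [Equiv.Perm.sign_mul, Equiv.Perm.sign_swap hij]
      simp
    rw [hsign, res_congr F φ (congrArg tbar hcomp) _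
      ((capT_le_tbar_zero (τ ∘ ⇑s)).trans' (le_of_eq (capT_perm τ s).symm))]
    rw [neg_smul, add_neg_cancel]
  · intro s _ h
    have h' : Equiv.swap i j * s = 1 * s := by rw [one_mul]; exact h
    have h1 : Equiv.swap i j = 1 := mul_right_cancel h'
    have hj : Equiv.swap i j i = i := by rw [h1]; rfl
    rw [Equiv.swap_apply_left] at hj
    exact hij hj.symm
  · intro a
    show Equiv.swap i j * (Equiv.swap i j * a) = a
    rw [← mul_assoc, Equiv.swap_mul_self, one_mul]

lemma part1b {p : ℕ} (φ : SimpC F p) (τ : Fin (p + 1) → U) (s : Equiv.Perm (Fin (p + 1))) :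
    iota F p φ (τ ∘ ⇑s) =
      (Equiv.Perm.sign s : ℤ) • F.res (le_of_eq (capT_perm τ s)) (iota F p φ τ) := by
  unfold iota
  rw [map_sum, Finset.smul_sum]
  refine Fintype.sum_bijective (fun t => s * t) (Group.mulLeft_bijective s) _ _ ?_
  intro t
  rw [map_zsmul, smul_smul, res_res]
  have hsign : ((Equiv.Perm.sign t : ℤ)) =
      (Equiv.Perm.sign s : ℤ) * (Equiv.Perm.sign (s * t) : ℤ) := by
    rw [Equiv.Perm.sign_mul]
    push_cast
    rw [← mul_assoc]
    norm_num [← Units.val_mul, Int.units_mul_self]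
  rw [← hsign]
  congr 1
lemma tbar_comp_swap {p : ℕ} (ρ : Fin (p + 2) → U) (j : Fin (p + 1)) {m : Fin (p + 2)}
    (hm : m ≠ j.succ) :
    tbar (ρ ∘ ⇑(Equiv.swap j.castSucc j.succ)) m = tbar ρ m := by
  have hsw : ∀ l : Fin (p + 2), m ≤ l → m ≤ Equiv.swap j.castSucc j.succ l := by
    intro l hl
    rcases eq_or_ne l j.castSucc with rfl | h1
    · rw [Equiv.swap_apply_left]
      exact hl.trans (Fin.castSucc_lt_succ (i := j)).le
    rcases eq_or_ne l j.succ with rfl | h2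
    · rw [Equiv.swap_apply_right]
      exact Fin.le_castSucc_iff.mpr (lt_of_le_of_ne hl hm)
    · rw [Equiv.swap_apply_of_ne_of_ne h1 h2]
      exact hl
  show tbarF _ m = tbarF _ m
  unfold tbarF
  refine le_antisymm (Finset.le_inf' _ _ fun l hl => ?_) (Finset.le_inf' _ _ fun l hl => ?_)
  · simp only [Finset.mem_filter, Finset.mem_univ, true_and] at hl
    have hv : ρ l = (ρ ∘ ⇑(Equiv.swap j.castSucc j.succ)) (Equiv.swap j.castSucc j.succ l) := by
      simp [Equiv.swap_apply_self]
    rw [hv]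
    exact Finset.inf'_le _
      (by simp only [Finset.mem_filter, Finset.mem_univ, true_and]; exact hsw l hl)
  · simp only [Finset.mem_filter, Finset.mem_univ, true_and] at hl
    exact Finset.inf'_le _
      (by simp only [Finset.mem_filter, Finset.mem_univ, true_and]; exact hsw l hl)

lemma faceC_succ_tbar_swap {p : ℕ} (ρ : Fin (p + 2) → U) (j : Fin (p + 1)) :
    faceC j.succ (tbar (ρ ∘ ⇑(Equiv.swap j.castSucc j.succ))) = faceC j.succ (tbar ρ) := by
  ext l
  exact tbar_comp_swap ρ j (Fin.succAbove_ne j.succ l)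

lemma faceC_zero_tbar {p : ℕ} (ρ : Fin (p + 2) → U) :
    faceC 0 (tbar ρ) = tbar (ρ ∘ Fin.succ) := by
  ext l
  show tbar ρ ((0 : Fin (p + 2)).succAbove l) = tbar (ρ ∘ Fin.succ) l
  rw [Fin.zero_succAbove]
  show tbarF ρ l.succ = tbarF (ρ ∘ Fin.succ) l
  unfold tbarF
  refine le_antisymm (Finset.le_inf' _ _ fun m hm => ?_) (Finset.le_inf' _ _ fun m hm => ?_)
  · simp only [Finset.mem_filter, Finset.mem_univ, true_and] at hm
    exact Finset.inf'_le _
      (by simp only [Finset.mem_filter, Finset.mem_univ, true_and]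
          exact Fin.succ_le_succ_iff.mpr hm)
  · simp only [Finset.mem_filter, Finset.mem_univ, true_and] at hm
    have hm0 : m ≠ 0 := by
      intro h
      rw [h] at hm
      exact absurd hm (by simp [Fin.le_zero_iff, Fin.succ_ne_zero])
    have hv : ρ m = (ρ ∘ Fin.succ) (m.pred hm0) := by simp
    rw [hv]
    refine Finset.inf'_le _ ?_
    simp only [Finset.mem_filter, Finset.mem_univ, true_and]
    rw [Fin.le_pred_iff]
    exact hm
lemma e_apply_zero {p : ℕ} (i : Fin (p + 2)) (t : Equiv.Perm (Fin (p + 1))) :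
    ((Fin.cycleRange i)⁻¹ * Equiv.Perm.decomposeFin.symm (0, t)) 0 = i := by
  rw [Equiv.Perm.mul_apply, Equiv.Perm.decomposeFin_symm_apply_zero,
    ← Fin.cycleRange_self i, Equiv.Perm.inv_def, Equiv.symm_apply_apply]

lemma e_apply_succ {p : ℕ} (i : Fin (p + 2)) (t : Equiv.Perm (Fin (p + 1))) (x : Fin (p + 1)) :
    ((Fin.cycleRange i)⁻¹ * Equiv.Perm.decomposeFin.symm (0, t)) x.succ = i.succAbove (t x) := by
  rw [Equiv.Perm.mul_apply, Equiv.Perm.decomposeFin_symm_apply_succ, Equiv.swap_self,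
    Equiv.refl_apply, ← Fin.cycleRange_succAbove i (t x), Equiv.Perm.inv_def, Equiv.symm_apply_apply]

lemma e_sign {p : ℕ} (i : Fin (p + 2)) (t : Equiv.Perm (Fin (p + 1))) :
    Equiv.Perm.sign ((Fin.cycleRange i)⁻¹ * Equiv.Perm.decomposeFin.symm (0, t)) =
      (-1) ^ (i : ℕ) * Equiv.Perm.sign t := by
  rw [Equiv.Perm.sign_mul, Equiv.Perm.sign_inv, Fin.sign_cycleRange,
    Equiv.Perm.decomposeFin.symm_sign, if_pos rfl, one_mul]

lemma e_bijective {p : ℕ} :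
    Function.Bijective (fun x : Fin (p + 2) × Equiv.Perm (Fin (p + 1)) =>
      (Fin.cycleRange x.1)⁻¹ * Equiv.Perm.decomposeFin.symm (0, x.2)) := by
  rw [Fintype.bijective_iff_injective_and_card]
  constructor
  · rintro ⟨i, t⟩ ⟨i', t'⟩ h
    simp only at h
    have h0 : i = i' := by
      have := congrArg (fun s : Equiv.Perm (Fin (p + 2)) => s 0) h
      simpa only [e_apply_zero] using this
    subst h0
    have h1 : Equiv.Perm.decomposeFin.symm (0, t) = Equiv.Perm.decomposeFin.symm (0, t') :=
      mul_left_cancel h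
    have h2 : ((0 : Fin (p + 2)), t) = (0, t') :=
      Equiv.Perm.decomposeFin.symm.injective h1
    rw [Prod.mk.injEq] at h2
    rw [h2.2]
  · simp [Fintype.card_perm, Nat.factorial_succ]
lemma smul_res_congr {p : ℕ} (φ : SimpC F p) {X : U} {χ χ' : Fin (p + 1) →o U} (h : χ = χ')
    (c : ℤ) (h₁ : X ≤ χ 0) (h₂ : X ≤ χ' 0) :
    c • F.res h₁ (φ χ) = c • F.res h₂ (φ χ') := by
  subst h; rfl

set_option maxHeartbeats 1000000 in
lemma part3 {p : ℕ} (φ : SimpC F p) :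
    iota F (p + 1) (dSimp F p φ) = dCech F p (iota F p φ) := by
  funext τ
  have hkey : ∀ (s : Equiv.Perm (Fin (p + 2))) (i : Fin (p + 2)),
      capT τ ≤ (faceC i (tbar (τ ∘ ⇑s))) 0 := fun s i =>
    ((capT_le_tbar_zero (τ ∘ ⇑s)).trans' (le_of_eq (capT_perm τ s).symm)).trans
      ((tbar (τ ∘ ⇑s)).monotone (Fin.zero_le _))
  have hsuc : ∀ s : Equiv.Perm (Fin (p + 2)), capT τ ≤ tbar ((τ ∘ ⇑s) ∘ Fin.succ) 0 :=
    fun s => (capT_le_comp τ (⇑s ∘ Fin.succ)).trans (capT_le_tbar_zero ((τ ∘ ⇑s) ∘ Fin.succ))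
  have hB : ∀ (i : Fin (p + 2)) (t : Equiv.Perm (Fin (p + 1))),
      capT τ ≤ tbar ((τ ∘ i.succAbove) ∘ ⇑t) 0 := fun i t =>
    ((capT_le_comp τ i.succAbove).trans
      (le_of_eq (capT_perm (τ ∘ i.succAbove) t).symm)).trans (capT_le_tbar_zero _)
  have hL : iota F (p + 1) (dSimp F p φ) τ =
      ∑ s : Equiv.Perm (Fin (p + 2)), ∑ i : Fin (p + 2),
        ((Equiv.Perm.sign s : ℤ) * (-1) ^ (i : ℕ)) •
          F.res (hkey s i) (φ (faceC i (tbar (τ ∘ ⇑s)))) := by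
    unfold iota
    refine Finset.sum_congr rfl fun s _ => ?_
    unfold dSimp
    rw [map_sum, Finset.smul_sum]
    refine Finset.sum_congr rfl fun i _ => ?_
    rw [map_zsmul, smul_smul]
    exact congrArg (fun x => ((Equiv.Perm.sign s : ℤ) * (-1) ^ (i : ℕ)) • x) (res_res F _ _ _)
  have hzero : ∀ j : Fin (p + 1),
      (∑ s : Equiv.Perm (Fin (p + 2)),
        ((Equiv.Perm.sign s : ℤ) * (-1) ^ ((j.succ : Fin (p + 2)) : ℕ)) •
          F.res (hkey s j.succ) (φ (faceC j.succ (tbar (τ ∘ ⇑s))))) = 0 := by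
    intro j
    refine Finset.sum_ninvolution (fun s => s * Equiv.swap j.castSucc j.succ) ?_ ?_
      (fun _ => Finset.mem_univ _) ?_
    · intro s
      have hchain : faceC j.succ (tbar (τ ∘ ⇑(s * Equiv.swap j.castSucc j.succ))) =
          faceC j.succ (tbar (τ ∘ ⇑s)) := by
        rw [comp_mul]
        exact faceC_succ_tbar_swap (τ ∘ ⇑s) j
      have hsign : ((Equiv.Perm.sign (s * Equiv.swap j.castSucc j.succ) : ℤ)) =
          -(Equiv.Perm.sign s : ℤ) := by
        rw [Equiv.Perm.sign_mul, Equiv.Perm.sign_swap (Fin.castSucc_lt_succ (i := j)).ne]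
        simp
      rw [res_congr F φ hchain (hkey _ j.succ) (hkey s j.succ), hsign, neg_mul, neg_smul,
        add_neg_cancel]
    · intro s _ h
      have h1 : Equiv.swap j.castSucc j.succ = 1 := mul_left_cancel (h.trans (mul_one s).symm)
      have h2 : Equiv.swap j.castSucc j.succ j.castSucc = j.castSucc := by rw [h1]; rfl
      rw [Equiv.swap_apply_left] at h2
      exact (Fin.castSucc_lt_succ (i := j)).ne' h2
    · intro a
      show a * Equiv.swap j.castSucc j.succ * Equiv.swap j.castSucc j.succ = a
      rw [mul_assoc, Equiv.swap_mul_self, mul_one]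
  have hL3 : iota F (p + 1) (dSimp F p φ) τ =
      ∑ s : Equiv.Perm (Fin (p + 2)), (Equiv.Perm.sign s : ℤ) •
        F.res (hsuc s) (φ (tbar ((τ ∘ ⇑s) ∘ Fin.succ))) := by
    rw [hL, Finset.sum_comm, Fin.sum_univ_succ,
      Finset.sum_eq_zero (fun j (_ : j ∈ Finset.univ) => hzero j), add_zero]
    refine Finset.sum_congr rfl fun s _ => ?_
    rw [res_congr F φ (faceC_zero_tbar (τ ∘ ⇑s)) (hkey s 0) (hsuc s)]
    norm_num
  have hR : dCech F p (iota F p φ) τ =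
      ∑ i : Fin (p + 2), ∑ t : Equiv.Perm (Fin (p + 1)),
        ((-1) ^ (i : ℕ) * (Equiv.Perm.sign t : ℤ)) •
          F.res (hB i t) (φ (tbar ((τ ∘ i.succAbove) ∘ ⇑t))) := by
    unfold dCech
    refine Finset.sum_congr rfl fun i _ => ?_
    unfold iota
    rw [map_sum, Finset.smul_sum]
    refine Finset.sum_congr rfl fun t _ => ?_
    rw [map_zsmul, res_res, smul_smul]
  have hsplit : (∑ i : Fin (p + 2), ∑ t : Equiv.Perm (Fin (p + 1)),
      ((-1) ^ (i : ℕ) * (Equiv.Perm.sign t : ℤ)) •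
        F.res (hB i t) (φ (tbar ((τ ∘ i.succAbove) ∘ ⇑t)))) =
      ∑ x : Fin (p + 2) × Equiv.Perm (Fin (p + 1)),
        ((-1) ^ (x.1 : ℕ) * (Equiv.Perm.sign x.2 : ℤ)) •
          F.res (hB x.1 x.2) (φ (tbar ((τ ∘ x.1.succAbove) ∘ ⇑x.2))) :=
    by rw [Fintype.sum_prod_type]
  rw [hL3, hR, hsplit]
  refine (Fintype.sum_bijective _ (e_bijective (p := p)) _ _ fun x => ?_).symm
  obtain ⟨i, t⟩ := x
  simp only
  set s : Equiv.Perm (Fin (p + 2)) := (Fin.cycleRange i)⁻¹ * Equiv.Perm.decomposeFin.symm (0, t)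
    with hs
  have hchain : (τ ∘ i.succAbove) ∘ ⇑t = (τ ∘ ⇑s) ∘ Fin.succ := by
    funext y
    exact (congrArg τ (e_apply_succ i t y)).symm
  have hsign : ((Equiv.Perm.sign s : ℤ)) = (-1) ^ (i : ℕ) * (Equiv.Perm.sign t : ℤ) := by
    rw [hs, e_sign]
    simp
  rw [res_congr F φ (congrArg tbar hchain) (hB i t) (hsuc s), hsign]

/-- `ι` and `π` are well defined on the reduced simplicial and alternating Čech complexes,
they are morphisms of complexes, and `π ∘ ι = id` on the reduced simplicial complex. -/
theorem iota_pi_chain_maps (p : ℕ) :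
    -- `ι` takes reduced cochains to alternating cochains:
    (∀ φ : SimpC F p, IsRed F φ → IsAlt F (iota F p φ)) ∧
    -- `π` takes alternating cochains to reduced cochains:
    (∀ ψ : CechC F p, IsAlt F ψ → IsRed F (pi F p ψ)) ∧
    -- `ι ∘ d_simp = d_Čech ∘ ι`:
    (∀ φ : SimpC F p, IsRed F φ → iota F (p + 1) (dSimp F p φ) = dCech F p (iota F p φ)) ∧
    -- `π ∘ d_Čech = d_simp ∘ π`:
    (∀ ψ : CechC F p, IsAlt F ψ → pi F (p + 1) (dCech F p ψ) = dSimp F p (pi F p ψ)) ∧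
    -- `π ∘ ι = id`:
    (∀ φ : SimpC F p, IsRed F φ → pi F p (iota F p φ) = φ) := by
  exact ⟨fun φ _ => ⟨fun τ h => part1a F φ τ h, fun τ s => part1b F φ τ s⟩,
    fun ψ h => part2 F ψ h, fun φ _ => part3 F φ, fun ψ _ => part4 F ψ,
    fun φ hφ => part5 F φ hφ⟩

end Stmt18
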